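/- Let $w : \mathbb{R} \to \mathbb{R}$ be twice differentiable with $0 < L \leq w \leq U$ and $|w''| \leq M$ everywhere, and let $\omega > 0$, $\sigma = \omega\sqrt{\tau}$. Define $I(x_1, x_2; \tau) = \int_{\mathbb{R}} k_{\sigma/\sqrt{2}}\big(z;\tfrac{1}{2}(x_1+x_2)\big)\, \frac{w(z)}{\int k_\sigma(y;z) w(y)\,dy}\, dz$. If $0 < \tau < \tau_0 < \frac{2L}{M\omega^2}$, then $1 - \frac{M\omega^2\tau}{2L} \leq I(x_1,x_2;\tau) \leq 1 + \frac{M\omega^2\tau}{2L - M\omega^2\tau_0}$ for all $x_1, x_2 \in \mathbb{R}$. -/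

import Mathlib

open MeasureTheory Real

/-- Gaussian density with mean `m` and standard deviation `σ`, evaluated at `y`. -/
noncomputable def gauss (σ m y : ℝ) : ℝ :=
  (Real.sqrt (2 * Real.pi) * σ)⁻¹ * Real.exp (-(y - m) ^ 2 / (2 * σ ^ 2))

/-- The integral `I(x₁, x₂; τ)` with kernel standard deviation `σ(τ) = ω √τ`. -/
noncomputable def Ifun (w : ℝ → ℝ) (ω τ x₁ x₂ : ℝ) : ℝ :=
  ∫ z : ℝ, gauss (ω * Real.sqrt τ / Real.sqrt 2) ((x₁ + x₂) / 2) z *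
    (w z / ∫ y : ℝ, gauss (ω * Real.sqrt τ) z y * w y)


lemma odd_int (b : ℝ) : ∫ x : ℝ, x * Real.exp (-b * x ^ 2) = 0 := by
  have h := integral_neg_eq_self (fun x : ℝ => x * Real.exp (-b * x ^ 2)) (volume : Measure ℝ)
  have h2 : ∫ x : ℝ, -(x * Real.exp (-b * x ^ 2)) = -∫ x : ℝ, x * Real.exp (-b * x ^ 2) :=
    integral_neg _
  rw [show (fun x : ℝ => -x * Real.exp (-b * (-x) ^ 2)) = fun x : ℝ => -(x * Real.exp (-b * x ^ 2)) by
        funext x; rw [neg_sq]; ring] at h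
  rw [h2] at h
  linarith

lemma integrable_sq_mul_exp {b : ℝ} (hb : 0 < b) :
    Integrable fun x : ℝ => x ^ 2 * Real.exp (-b * x ^ 2) := by
  have := integrable_rpow_mul_exp_neg_mul_sq hb (s := 2) (by norm_num)
  simpa [Real.rpow_natCast] using this

lemma sq_int {b : ℝ} (hb : 0 < b) :
    ∫ x : ℝ, x ^ 2 * Real.exp (-b * x ^ 2) = Real.sqrt (π / b) / (2 * b) := by
  set F : ℝ → ℝ := fun x => -x * Real.exp (-b * x ^ 2) / (2 * b) with hF_def
  set G : ℝ → ℝ := fun x => x ^ 2 * Real.exp (-b * x ^ 2) - Real.exp (-b * x ^ 2) / (2 * b)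
    with hG_def
  have hb' : (2 * b) ≠ 0 := by positivity
  have hF : ∀ x : ℝ, HasDerivAt F (G x) x := by
    intro x
    have h1 : HasDerivAt (fun x : ℝ => -b * x ^ 2) (-b * (2 * x)) x := by
      simpa using ((hasDerivAt_pow 2 x).const_mul (-b))
    have h2 := h1.exp
    have h3 := ((hasDerivAt_id x).neg.mul h2).div_const (2 * b)
    refine h3.congr_deriv ?_
    simp only [hG_def, id_eq, Pi.neg_apply]
    field_simp
    ring
  have hGint : Integrable G :=
    (integrable_sq_mul_exp hb).sub ((integrable_exp_neg_mul_sq hb).div_const _)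
  have htop0 : Filter.Tendsto (fun x : ℝ => x * Real.exp (-b * x ^ 2)) Filter.atTop (nhds 0) := by
    have h := rpow_mul_exp_neg_mul_sq_isLittleO_exp_neg hb 1
    simp only [Real.rpow_one] at h
    exact h.isBigO.trans_tendsto
      (Real.tendsto_exp_atBot.comp (Filter.tendsto_id.const_mul_atTop_of_neg (by norm_num)))
  have htop : Filter.Tendsto F Filter.atTop (nhds 0) := by
    have := (htop0.neg).div_const (2 * b)
    simpa [hF_def, neg_div, neg_mul] using this
  have hbot : Filter.Tendsto F Filter.atBot (nhds 0) := by
    have h2 : Filter.Tendsto (fun x : ℝ => (-x) * Real.exp (-b * (-x) ^ 2) / (2*b))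
        Filter.atBot (nhds 0) := by
      have h0 := (htop0.div_const (2*b)).comp Filter.tendsto_neg_atBot_atTop
      rw [zero_div] at h0
      exact h0.congr (fun x => by simp [Function.comp])
    refine h2.congr (fun x => ?_)
    simp [hF_def, neg_sq]
  have h1 : ∫ x in Set.Iic (0:ℝ), G x = F 0 - 0 :=
    integral_Iic_of_hasDerivAt_of_tendsto' (fun x _ => hF x) hGint.integrableOn hbot
  have h2 : ∫ x in Set.Ioi (0:ℝ), G x = 0 - F 0 :=
    integral_Ioi_of_hasDerivAt_of_tendsto' (fun x _ => hF x) hGint.integrableOn htop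
  have hGzero : ∫ x : ℝ, G x = 0 := by
    rw [← intervalIntegral.integral_Iic_add_Ioi hGint.integrableOn hGint.integrableOn, h1, h2]; ring
  have hsplit : ∫ x : ℝ, x ^ 2 * Real.exp (-b * x ^ 2)
      = (∫ x : ℝ, G x) + ∫ x : ℝ, Real.exp (-b * x ^ 2) / (2 * b) := by
    rw [← integral_add hGint ((integrable_exp_neg_mul_sq hb).div_const _)]
    congr 1; funext x; simp [hG_def]
  rw [hsplit, hGzero, zero_add, integral_div, integral_gaussian]

lemma gauss_eq (σ m y : ℝ) :
    gauss σ m y = (Real.sqrt (2 * π) * σ)⁻¹ * Real.exp (-(2 * σ ^ 2)⁻¹ * (y - m) ^ 2) := by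
  unfold gauss
  rw [div_eq_mul_inv]
  ring_nf

lemma gauss_nonneg {σ : ℝ} (hσ : 0 < σ) (m y : ℝ) : 0 ≤ gauss σ m y := by
  unfold gauss
  have : 0 < Real.sqrt (2 * π) := Real.sqrt_pos.2 (by positivity)
  positivity

lemma gauss_norm {σ : ℝ} (hσ : 0 < σ) :
    (Real.sqrt (2 * π) * σ)⁻¹ * Real.sqrt (π / (2 * σ ^ 2)⁻¹) = 1 := by
  have h1 : π / (2 * σ ^ 2)⁻¹ = (2 * π) * σ ^ 2 := by
    field_simp
  rw [h1, Real.sqrt_mul (x := 2 * π) (by positivity) (σ ^ 2), Real.sqrt_sq hσ.le]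
  have : 0 < Real.sqrt (2 * π) := Real.sqrt_pos.2 (by positivity)
  field_simp

section moments
variable {σ : ℝ} (hσ : 0 < σ) (m : ℝ)

include hσ

lemma hb_pos : (0:ℝ) < (2 * σ ^ 2)⁻¹ := by positivity

lemma gauss_integrable : Integrable (gauss σ m) := by
  rw [show gauss σ m = fun y => (Real.sqrt (2 * π) * σ)⁻¹ *
    Real.exp (-(2 * σ ^ 2)⁻¹ * (y - m) ^ 2) from funext (gauss_eq σ m)]
  exact ((integrable_exp_neg_mul_sq (hb_pos hσ)).comp_sub_right m).const_mul _

lemma gauss_mul_integrable :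
    Integrable (fun y => gauss σ m y * (y - m)) := by
  have h : ∀ y : ℝ, gauss σ m y * (y - m)
      = (Real.sqrt (2 * π) * σ)⁻¹ *
        ((fun x => x * Real.exp (-(2 * σ ^ 2)⁻¹ * x ^ 2)) (y - m)) := by
    intro y; rw [gauss_eq]; ring
  simp_rw [h]
  exact ((integrable_mul_exp_neg_mul_sq (hb_pos hσ)).comp_sub_right m).const_mul _

lemma gauss_sq_integrable :
    Integrable (fun y => gauss σ m y * (y - m) ^ 2) := by
  have h : ∀ y : ℝ, gauss σ m y * (y - m) ^ 2
      = (Real.sqrt (2 * π) * σ)⁻¹ *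
        ((fun x => x ^ 2 * Real.exp (-(2 * σ ^ 2)⁻¹ * x ^ 2)) (y - m)) := by
    intro y; rw [gauss_eq]; ring
  simp_rw [h]
  exact ((integrable_sq_mul_exp (hb_pos hσ)).comp_sub_right m).const_mul _

lemma gauss_int_one : ∫ y : ℝ, gauss σ m y = 1 := by
  simp_rw [gauss_eq]
  rw [integral_const_mul]
  rw [show (fun y : ℝ => Real.exp (-(2 * σ ^ 2)⁻¹ * (y - m) ^ 2))
      = fun y : ℝ => (fun x : ℝ => Real.exp (-(2 * σ ^ 2)⁻¹ * x ^ 2)) (y - m) from rfl]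
  rw [integral_sub_right_eq_self (fun x : ℝ => Real.exp (-(2 * σ ^ 2)⁻¹ * x ^ 2)) m,
    integral_gaussian]
  exact gauss_norm hσ

omit hσ in
lemma gauss_int_fst : ∫ y : ℝ, gauss σ m y * (y - m) = 0 := by
  have h : ∀ y : ℝ, gauss σ m y * (y - m)
      = (Real.sqrt (2 * π) * σ)⁻¹ *
        ((fun x => x * Real.exp (-(2 * σ ^ 2)⁻¹ * x ^ 2)) (y - m)) := by
    intro y; rw [gauss_eq]; ring
  simp_rw [h]
  rw [integral_const_mul,
    integral_sub_right_eq_self (fun x : ℝ => x * Real.exp (-(2 * σ ^ 2)⁻¹ * x ^ 2)) m,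
    odd_int, mul_zero]

lemma gauss_int_snd : ∫ y : ℝ, gauss σ m y * (y - m) ^ 2 = σ ^ 2 := by
  have h : ∀ y : ℝ, gauss σ m y * (y - m) ^ 2
      = (Real.sqrt (2 * π) * σ)⁻¹ *
        ((fun x => x ^ 2 * Real.exp (-(2 * σ ^ 2)⁻¹ * x ^ 2)) (y - m)) := by
    intro y; rw [gauss_eq]; ring
  simp_rw [h]
  rw [integral_const_mul,
    integral_sub_right_eq_self (fun x : ℝ => x ^ 2 * Real.exp (-(2 * σ ^ 2)⁻¹ * x ^ 2)) m,
    sq_int (hb_pos hσ)]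
  have h2 : Real.sqrt (π / (2 * σ ^ 2)⁻¹) / (2 * (2 * σ ^ 2)⁻¹)
      = σ ^ 2 * Real.sqrt (π / (2 * σ ^ 2)⁻¹) := by
    rw [eq_comm, mul_comm, div_eq_mul_inv]
    congr 1
    field_simp
  rw [h2, ← mul_assoc, mul_comm ((Real.sqrt (2*π)*σ)⁻¹), mul_assoc, gauss_norm hσ, mul_one]

end moments
lemma quad_upper {w w' : ℝ → ℝ} {M : ℝ} (hw' : ∀ x, HasDerivAt w (w' x) x)
    (hlip : ∀ a b : ℝ, |w' a - w' b| ≤ M * |a - b|) (z y : ℝ) :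
    w y ≤ w z + w' z * (y - z) + M / 2 * (y - z) ^ 2 := by
  set g : ℝ → ℝ := fun t => w z + w' z * (t - z) + M / 2 * (t - z) ^ 2 - w t with hg_def
  set g' : ℝ → ℝ := fun t => w' z + M * (t - z) - w' t with hg'_def
  have hg : ∀ t, HasDerivAt g (g' t) t := by
    intro t
    have h1 : HasDerivAt (fun t : ℝ => w z + w' z * (t - z)) (w' z) t := by
      simpa using (((hasDerivAt_id t).sub_const z).const_mul (w' z)).const_add (w z)
    have h2 : HasDerivAt (fun t : ℝ => M / 2 * (t - z) ^ 2) (M * (t - z)) t := by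
      have h := (((hasDerivAt_id t).sub_const z).pow 2).const_mul (M / 2)
      refine h.congr_deriv ?_
      simp [id_eq]; ring
    exact (h1.add h2).sub (hw' t)
  have hdiff : Differentiable ℝ g := fun x => (hg x).differentiableAt
  have hcont : Continuous g := hdiff.continuous
  have hgz : g z = 0 := by simp [hg_def]
  have key : 0 ≤ g y := by
    rcases le_total z y with hzy | hyz
    · have hmono : MonotoneOn g (Set.Ici z) := by
        refine monotoneOn_of_hasDerivWithinAt_nonneg (convex_Ici z) hcont.continuousOn
          (fun t ht => (hg t).hasDerivWithinAt) (fun t ht => ?_)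
        rw [interior_Ici] at ht
        have h1 := (abs_le.1 (hlip t z)).2
        rw [abs_of_pos (sub_pos.2 ht)] at h1
        simp only [hg'_def]
        linarith
      have := hmono (Set.self_mem_Ici) (Set.mem_Ici.2 hzy) hzy
      rwa [hgz] at this
    · have hanti : AntitoneOn g (Set.Iic z) := by
        refine antitoneOn_of_hasDerivWithinAt_nonpos (convex_Iic z) hcont.continuousOn
          (fun t ht => (hg t).hasDerivWithinAt) (fun t ht => ?_)
        rw [interior_Iic] at ht
        have h1 := (abs_le.1 (hlip z t)).2
        rw [abs_of_pos (sub_pos.2 ht)] at h1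
        simp only [hg'_def]
        linarith
      have := hanti (Set.mem_Iic.2 hyz) (Set.self_mem_Iic) hyz
      rwa [hgz] at this
  simp only [hg_def] at key
  linarith

lemma quad_lower {w w' : ℝ → ℝ} {M : ℝ} (hw' : ∀ x, HasDerivAt w (w' x) x)
    (hlip : ∀ a b : ℝ, |w' a - w' b| ≤ M * |a - b|) (z y : ℝ) :
    w z + w' z * (y - z) - M / 2 * (y - z) ^ 2 ≤ w y := by
  have h := quad_upper (w := fun t => -w t) (w' := fun t => -w' t)
    (fun x => (hw' x).neg) (fun a b => by
      rw [show -w' a - -w' b = -(w' a - w' b) by ring, abs_neg]; exact hlip a b) z y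
  linarith

lemma inner_bounds {w w' : ℝ → ℝ} {M σ U : ℝ} (hσ : 0 < σ)
    (hw' : ∀ x, HasDerivAt w (w' x) x)
    (hlip : ∀ a b : ℝ, |w' a - w' b| ≤ M * |a - b|)
    (hwcont : Continuous w) (hbdd : ∀ x, |w x| ≤ U) (z : ℝ) :
    w z - M / 2 * σ ^ 2 ≤ (∫ y : ℝ, gauss σ z y * w y) ∧
      (∫ y : ℝ, gauss σ z y * w y) ≤ w z + M / 2 * σ ^ 2 := by
  have hgw : Integrable (fun y => gauss σ z y * w y) := by
    refine ((gauss_integrable hσ z).bdd_mul hwcont.aestronglyMeasurable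
      (c := U) (Filter.Eventually.of_forall fun x => hbdd x)).congr (Filter.Eventually.of_forall fun y => mul_comm _ _)
  set P : ℝ → ℝ := fun y => w z * gauss σ z y +
    (w' z * (gauss σ z y * (y - z)) + M / 2 * (gauss σ z y * (y - z) ^ 2)) with hP_def
  set Q : ℝ → ℝ := fun y => w z * gauss σ z y +
    (w' z * (gauss σ z y * (y - z)) - M / 2 * (gauss σ z y * (y - z) ^ 2)) with hQ_def
  have hP : Integrable P :=
    ((gauss_integrable hσ z).const_mul (w z)).add
      (((gauss_mul_integrable hσ z).const_mul (w' z)).add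
        ((gauss_sq_integrable hσ z).const_mul (M / 2)))
  have hQ : Integrable Q :=
    ((gauss_integrable hσ z).const_mul (w z)).add
      (((gauss_mul_integrable hσ z).const_mul (w' z)).sub
        ((gauss_sq_integrable hσ z).const_mul (M / 2)))
  have e1 : ∫ y : ℝ, w z * gauss σ z y = w z := by
    rw [integral_const_mul, gauss_int_one hσ, mul_one]
  have e2 : ∫ y : ℝ, w' z * (gauss σ z y * (y - z)) = 0 := by
    rw [integral_const_mul, gauss_int_fst, mul_zero]
  have e3 : ∫ y : ℝ, M / 2 * (gauss σ z y * (y - z) ^ 2) = M / 2 * σ ^ 2 := by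
    rw [integral_const_mul, gauss_int_snd hσ]
  have hPint : ∫ y : ℝ, P y = w z + M / 2 * σ ^ 2 := by
    have s1 : ∫ y : ℝ, P y = (∫ y : ℝ, w z * gauss σ z y) +
        ∫ y : ℝ, (w' z * (gauss σ z y * (y - z)) + M / 2 * (gauss σ z y * (y - z) ^ 2)) :=
      integral_add ((gauss_integrable hσ z).const_mul (w z))
        (((gauss_mul_integrable hσ z).const_mul (w' z)).add
          ((gauss_sq_integrable hσ z).const_mul (M / 2)))
    have s2 : ∫ y : ℝ, (w' z * (gauss σ z y * (y - z)) + M / 2 * (gauss σ z y * (y - z) ^ 2))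
        = (∫ y : ℝ, w' z * (gauss σ z y * (y - z))) +
          ∫ y : ℝ, M / 2 * (gauss σ z y * (y - z) ^ 2) :=
      integral_add ((gauss_mul_integrable hσ z).const_mul (w' z))
        ((gauss_sq_integrable hσ z).const_mul (M / 2))
    rw [s1, s2, e1, e2, e3, zero_add]
  have hQint : ∫ y : ℝ, Q y = w z - M / 2 * σ ^ 2 := by
    have s1 : ∫ y : ℝ, Q y = (∫ y : ℝ, w z * gauss σ z y) +
        ∫ y : ℝ, (w' z * (gauss σ z y * (y - z)) - M / 2 * (gauss σ z y * (y - z) ^ 2)) :=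
      integral_add ((gauss_integrable hσ z).const_mul (w z))
        (((gauss_mul_integrable hσ z).const_mul (w' z)).sub
          ((gauss_sq_integrable hσ z).const_mul (M / 2)))
    have s2 : ∫ y : ℝ, (w' z * (gauss σ z y * (y - z)) - M / 2 * (gauss σ z y * (y - z) ^ 2))
        = (∫ y : ℝ, w' z * (gauss σ z y * (y - z))) -
          ∫ y : ℝ, M / 2 * (gauss σ z y * (y - z) ^ 2) :=
      integral_sub ((gauss_mul_integrable hσ z).const_mul (w' z))
        ((gauss_sq_integrable hσ z).const_mul (M / 2))
    rw [s1, s2, e1, e2, e3, zero_sub]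
    ring
  constructor
  · rw [← hQint]
    refine integral_mono hQ hgw (fun y => ?_)
    have h := mul_le_mul_of_nonneg_left (quad_lower hw' hlip z y) (gauss_nonneg hσ z y)
    simp only [hQ_def]
    nlinarith [h]
  · rw [← hPint]
    refine integral_mono hgw hP (fun y => ?_)
    have h := mul_le_mul_of_nonneg_left (quad_upper hw' hlip z y) (gauss_nonneg hσ z y)
    simp only [hP_def]
    nlinarith [h]

lemma gauss_continuous (σ m : ℝ) : Continuous (gauss σ m) := by
  unfold gauss
  exact continuous_const.mul
    (Real.continuous_exp.comp (((continuous_id.sub continuous_const).pow 2).neg.div_const _))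

lemma gauss_continuous2 (σ : ℝ) : Continuous (fun p : ℝ × ℝ => gauss σ p.1 p.2) := by
  unfold gauss
  exact continuous_const.mul
    (Real.continuous_exp.comp (((continuous_snd.sub continuous_fst).pow 2).neg.div_const _))


theorem I_bounds (w w' w'' : ℝ → ℝ) (L U M ω τ τ₀ : ℝ)
    (hw' : ∀ x, HasDerivAt w (w' x) x)
    (hw'' : ∀ x, HasDerivAt w' (w'' x) x)
    (hM : ∀ x, |w'' x| ≤ M)
    (hL : 0 < L) (hLU : ∀ x, L ≤ w x ∧ w x ≤ U)
    (hω : 0 < ω) (hτ : 0 < τ) (hττ₀ : τ < τ₀) (hτ₀small : τ₀ < 2 * L / (M * ω ^ 2))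
    (x₁ x₂ : ℝ) :
    1 - M * ω ^ 2 * τ / (2 * L) ≤ Ifun w ω τ x₁ x₂ ∧
      Ifun w ω τ x₁ x₂ ≤ 1 + M * ω ^ 2 * τ / (2 * L - M * ω ^ 2 * τ₀) := by
  -- basic positivity facts
  have hM0 : 0 ≤ M := (abs_nonneg _).trans (hM 0)
  have hτ₀ : 0 < τ₀ := hτ.trans hττ₀
  set σ : ℝ := ω * Real.sqrt τ with hσ_def
  have hσ : 0 < σ := mul_pos hω (Real.sqrt_pos.2 hτ)
  have hσ2 : σ ^ 2 = ω ^ 2 * τ := by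
    rw [hσ_def, mul_pow, Real.sq_sqrt hτ.le]
  set σ' : ℝ := ω * Real.sqrt τ / Real.sqrt 2 with hσ'_def
  have hσ' : 0 < σ' := div_pos hσ (Real.sqrt_pos.2 two_pos)
  have hwdiff : Differentiable ℝ w := fun x => (hw' x).differentiableAt
  have hwcont : Continuous w := hwdiff.continuous
  have hU0 : 0 < U := hL.trans_le ((hLU 0).1.trans (hLU 0).2)
  have hbdd : ∀ x, |w x| ≤ U := fun x =>
    abs_le.2 ⟨by linarith [(hLU x).1], (hLU x).2⟩
  -- Lipschitz bound on w'
  have hlip : ∀ a b : ℝ, |w' a - w' b| ≤ M * |a - b| := by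
    intro a b
    have := Convex.norm_image_sub_le_of_norm_hasDerivWithin_le (f := w') (f' := w'')
      (s := Set.univ) (C := M)
      (fun x _ => (hw'' x).hasDerivWithinAt) (fun x _ => hM x) convex_univ
      (Set.mem_univ b) (Set.mem_univ a)
    simpa [Real.norm_eq_abs] using this
  -- abbreviations
  set a : ℝ := M * ω ^ 2 * τ with ha_def
  set a₀ : ℝ := M * ω ^ 2 * τ₀ with ha₀_def
  have ha0 : 0 ≤ a := by positivity
  have haa₀ : a ≤ a₀ := by
    rw [ha_def, ha₀_def]
    exact mul_le_mul_of_nonneg_left hττ₀.le (by positivity)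
  have ha₀L : a₀ < 2 * L := by
    rcases eq_or_lt_of_le (show (0:ℝ) ≤ M * ω ^ 2 by positivity) with h | h
    · rw [ha₀_def, ← h, zero_mul]; linarith
    · rw [ha₀_def, mul_comm]
      exact (lt_div_iff₀ h).1 hτ₀small
  set J : ℝ → ℝ := fun z => ∫ y : ℝ, gauss σ z y * w y with hJ_def
  have hJbounds : ∀ z, w z - a / 2 ≤ J z ∧ J z ≤ w z + a / 2 := by
    intro z
    have h := inner_bounds hσ hw' hlip hwcont hbdd z
    have : M / 2 * σ ^ 2 = a / 2 := by rw [hσ2, ha_def]; ring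
    rw [this] at h
    exact h
  have hJpos : ∀ z, 0 < J z := by
    intro z
    have h1 := (hJbounds z).1
    have h2 := (hLU z).1
    linarith
  -- bounds on the ratio
  set c₁ : ℝ := 1 - M * ω ^ 2 * τ / (2 * L) with hc₁_def
  set c₂ : ℝ := 1 + M * ω ^ 2 * τ / (2 * L - M * ω ^ 2 * τ₀) with hc₂_def
  have hc₁ : c₁ = 1 - a / (2 * L) := rfl
  have hc₂ : c₂ = 1 + a / (2 * L - a₀) := rfl
  have hflo : ∀ z, c₁ ≤ w z / J z := by
    intro z
    have hwz := (hLU z).1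
    have hJp := hJpos z
    have hJhi := (hJbounds z).2
    rw [hc₁, le_div_iff₀ hJp]
    set q : ℝ := a / (2 * L) with hq_def
    have hq0 : 0 ≤ q := by positivity
    have hq1 : q ≤ 1 := by
      rw [hq_def, div_le_one (by linarith)]
      linarith
    have hqa : q * (2 * L) = a := div_mul_cancel₀ _ (by positivity)
    have hJhi' : J z ≤ w z + q * L := by nlinarith
    nlinarith [mul_nonneg hq0 (sub_nonneg.2 hwz), sq_nonneg q, mul_nonneg (mul_nonneg hq0 hq0) hL.le]
  have hfhi : ∀ z, w z / J z ≤ c₂ := by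
    intro z
    have hwz := (hLU z).1
    have hJp := hJpos z
    have hJlo := (hJbounds z).1
    rw [hc₂, div_le_iff₀ hJp]
    set r : ℝ := a / (2 * L - a₀) with hr_def
    have hr0 : 0 ≤ r := by
      apply div_nonneg ha0; linarith
    have hra : r * (2 * L - a₀) = a := div_mul_cancel₀ _ (by linarith : (2:ℝ) * L - a₀ ≠ 0)
    nlinarith [mul_nonneg hr0 (by linarith : (0:ℝ) ≤ w z - L + a₀ / 2 - a / 2),
      mul_le_mul_of_nonneg_left hJlo (by linarith : (0:ℝ) ≤ 1 + r)]
  have hc₁0 : 0 ≤ c₁ := by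
    rw [hc₁]
    have : a / (2 * L) ≤ 1 := by rw [div_le_one (by linarith)]; linarith
    linarith
  -- outer integral
  set m : ℝ := (x₁ + x₂) / 2 with hm_def
  set g : ℝ → ℝ := gauss σ' m with hg_def
  have hIfun : Ifun w ω τ x₁ x₂ = ∫ z : ℝ, g z * (w z / J z) := rfl
  -- measurability of the ratio
  have hJsm : StronglyMeasurable J := by
    have hc : Continuous (fun p : ℝ × ℝ => gauss σ p.1 p.2 * w p.2) :=
      (gauss_continuous2 σ).mul (hwcont.comp continuous_snd)
    exact hc.stronglyMeasurable.integral_prod_right'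
  have hratio : AEStronglyMeasurable (fun z => w z / J z) (volume : Measure ℝ) :=
    (hwcont.measurable.div hJsm.measurable).aestronglyMeasurable
  have hgint : Integrable g := gauss_integrable hσ' m
  have hgfint : Integrable (fun z => g z * (w z / J z)) := by
    refine Integrable.mono' (hgint.const_mul c₂)
      ((gauss_continuous σ' m).aestronglyMeasurable.mul hratio)
      (Filter.Eventually.of_forall fun z => ?_)
    have hgz : 0 ≤ g z := gauss_nonneg hσ' m z
    have hfz : 0 ≤ w z / J z := div_nonneg (by linarith [(hLU z).1]) (hJpos z).le
    rw [Real.norm_eq_abs, abs_of_nonneg (mul_nonneg hgz hfz), mul_comm c₂ (g z)]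
    exact mul_le_mul_of_nonneg_left (hfhi z) hgz
  constructor
  · rw [hIfun]
    have h1 : ∫ z : ℝ, c₁ * g z = c₁ := by
      rw [integral_const_mul, gauss_int_one hσ', mul_one]
    calc (1 : ℝ) - M * ω ^ 2 * τ / (2 * L) = ∫ z : ℝ, c₁ * g z := h1.symm
      _ ≤ ∫ z : ℝ, g z * (w z / J z) := by
          refine integral_mono (hgint.const_mul c₁) hgfint (fun z => ?_)
          rw [mul_comm c₁ (g z)]
          exact mul_le_mul_of_nonneg_left (hflo z) (gauss_nonneg hσ' m z)
  · rw [hIfun]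
    have h2 : ∫ z : ℝ, c₂ * g z = c₂ := by
      rw [integral_const_mul, gauss_int_one hσ', mul_one]
    calc ∫ z : ℝ, g z * (w z / J z) ≤ ∫ z : ℝ, c₂ * g z := by
          refine integral_mono hgfint (hgint.const_mul c₂) (fun z => ?_)
          rw [mul_comm c₂ (g z)]
          exact mul_le_mul_of_nonneg_left (hfhi z) (gauss_nonneg hσ' m z)
      _ = 1 + M * ω ^ 2 * τ / (2 * L - M * ω ^ 2 * τ₀) := h2
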